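/- Let g, h : ℂ → ℂ be entire (Differentiable ℂ) non-constant functions and define f : ℂ × ℂ → ℂ × ℂ by f(w₁, w₂) = (g(w₁), h(w₂)). Let J₂(f) := {ζ ∈ ℂ × ℂ : the family of iterates {f^[n] : n ∈ ℕ} is not normal (general sense) at ζ}. Then: (1) if ζ ∈ J₂(f) then f(ζ) ∈ J₂(f); and (2) if ζ' ∈ ℂ × ℂ satisfies f(ζ') ∈ J₂(f), then ζ' ∈ J₂(f). In other words, J₂(f) is completely invariant under f. -/

import Mathlib

open Filter Set Topology

/-- A family `F : ι → α → E` of functions into a normed space is normal in the general sense on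
a set `U` if every sequence in the family has a subsequence which either converges uniformly on
every compact subset of `U` to a limit function, or diverges uniformly to `∞` on every compact
subset of `U`. -/
def NormalGenOn {α E ι : Type*} [TopologicalSpace α] [NormedAddCommGroup E]
    (F : ι → α → E) (U : Set α) : Prop :=
  ∀ u : ℕ → ι, ∃ φ : ℕ → ℕ, StrictMono φ ∧
    ((∃ f : α → E, ∀ K : Set α, K ⊆ U → IsCompact K →
        TendstoUniformlyOn (fun n => F (u (φ n))) f Filter.atTop K) ∨
     (∀ K : Set α, K ⊆ U → IsCompact K → ∀ M : ℝ, 0 < M →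
        ∀ᶠ n in Filter.atTop, ∀ z ∈ K, M ≤ ‖F (u (φ n)) z‖))

/-- A family is normal in the general sense at a point if it is normal in the general sense on
some open neighborhood of that point. -/
def NormalGenAt {α E ι : Type*} [TopologicalSpace α] [NormedAddCommGroup E]
    (F : ι → α → E) (z : α) : Prop :=
  ∃ U : Set α, IsOpen U ∧ z ∈ U ∧ NormalGenOn F U

/-- The Julia set of a self-map `G` of a normed space: the set of points at which the family of
iterates `{G^[n] : n ∈ ℕ}` is not normal in the general sense. -/
def juliaSet {E : Type*} [NormedAddCommGroup E] (G : E → E) : Set E :=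
  {z | ¬ NormalGenAt (fun n : ℕ => G^[n]) z}

/-- The filled-in Julia set of a self-map `G` of a normed space: the set of points with bounded
orbit under `G`. -/
def filledJuliaSet {E : Type*} [NormedAddCommGroup E] (G : E → E) : Set E :=
  {z | Bornology.IsBounded (Set.range fun n : ℕ => G^[n] z)}

/-- Pulling back a compact set through an open continuous map on an open set. -/
lemma compact_pullback {X Y : Type*} [TopologicalSpace X] [TopologicalSpace Y]
    [LocallyCompactSpace X] {f : X → Y} (hof : IsOpenMap f) {U : Set X} (hU : IsOpen U)
    {K : Set Y} (hK : IsCompact K) (hKU : K ⊆ f '' U) :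
    ∃ L : Set X, IsCompact L ∧ L ⊆ U ∧ K ⊆ f '' L := by
  have h : ∀ x ∈ K, ∃ N : Set X, IsCompact N ∧ N ⊆ U ∧ x ∈ f '' interior N := by
    intro x hx
    obtain ⟨z, hzU, rfl⟩ := hKU hx
    obtain ⟨N, hNc, hzN, hNU⟩ := exists_compact_subset hU hzU
    exact ⟨N, hNc, hNU, ⟨z, hzN, rfl⟩⟩
  choose! N hNc hNU hxN using h
  obtain ⟨t, htK, hcov⟩ := hK.elim_nhds_subcover (fun x => f '' interior (N x))
    (fun x hx => (hof _ isOpen_interior).mem_nhds (hxN x hx))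
  refine ⟨⋃ x ∈ t, N x, t.isCompact_biUnion (fun x hx => hNc x (htK x hx)),
    Set.iUnion₂_subset (fun x hx => hNU x (htK x hx)), ?_⟩
  intro y hy
  obtain ⟨x, hxt, hyx⟩ := Set.mem_iUnion₂.1 (hcov hy)
  obtain ⟨z, hz, rfl⟩ := hyx
  exact ⟨z, Set.mem_iUnion₂.2 ⟨x, hxt, interior_subset hz⟩, rfl⟩

/-- If the iterates of `f` are normal at `f ζ`, they are normal at `ζ`. -/
lemma normal_pullback {E : Type*} [NormedAddCommGroup E] {f : E → E} (hf : Continuous f)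
    {ζ : E} (h : NormalGenAt (fun n : ℕ => f^[n]) (f ζ)) :
    NormalGenAt (fun n : ℕ => f^[n]) ζ := by
  obtain ⟨U, hUo, hζU, hN⟩ := h
  refine ⟨f ⁻¹' U, hUo.preimage hf, hζU, ?_⟩
  intro u
  by_cases hc : ∃ᶠ k in atTop, u k = 0
  · obtain ⟨φ, hφ, hφ0⟩ := extraction_of_frequently_atTop hc
    refine ⟨φ, hφ, Or.inl ⟨id, fun K _ _ => ?_⟩⟩
    rw [Metric.tendstoUniformlyOn_iff]
    intro ε hε
    filter_upwards with n x hx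
    simp [hφ0 n, hε]
  · rw [not_frequently] at hc
    obtain ⟨Nn, hNn⟩ := eventually_atTop.1 hc
    set v : ℕ → ℕ := fun k => u (k + Nn) - 1 with hv
    obtain ⟨ψ, hψ, hcase⟩ := hN v
    have key : ∀ k (x : E), f^[u (ψ k + Nn)] x = f^[v (ψ k)] (f x) := by
      intro k x
      have h1 : u (ψ k + Nn) ≠ 0 := hNn _ (Nat.le_add_left _ _)
      have h2 : u (ψ k + Nn) = v (ψ k) + 1 := (Nat.succ_pred_eq_of_pos (Nat.pos_of_ne_zero h1)).symm
      rw [h2, Function.iterate_succ_apply]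
    refine ⟨fun k => ψ k + Nn, fun a b hab => by
      simpa using Nat.add_lt_add_right (hψ hab) Nn, ?_⟩
    rcases hcase with ⟨F, hF⟩ | hdiv
    · refine Or.inl ⟨F ∘ f, fun K hKV hKc => ?_⟩
      have hfK : f '' K ⊆ U := by rintro y ⟨x, hx, rfl⟩; exact hKV hx
      have := hF (f '' K) hfK (hKc.image hf)
      rw [Metric.tendstoUniformlyOn_iff] at this ⊢
      intro ε hε
      filter_upwards [this ε hε] with n hn x hx
      have := hn (f x) ⟨x, hx, rfl⟩
      simpa [key n x] using this
    · refine Or.inr fun K hKV hKc M hM => ?_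
      have hfK : f '' K ⊆ U := by rintro y ⟨x, hx, rfl⟩; exact hKV hx
      filter_upwards [hdiv (f '' K) hfK (hKc.image hf) M hM] with n hn x hx
      rw [key n x]
      exact hn (f x) ⟨x, hx, rfl⟩

/-- If the iterates of an open continuous map `f` are normal at `ζ`, they are normal at `f ζ`. -/
lemma normal_pushforward {E : Type*} [NormedAddCommGroup E] [LocallyCompactSpace E]
    {f : E → E} (hf : Continuous f) (hof : IsOpenMap f)
    {ζ : E} (h : NormalGenAt (fun n : ℕ => f^[n]) ζ) :
    NormalGenAt (fun n : ℕ => f^[n]) (f ζ) := by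
  classical
  obtain ⟨U, hUo, hζU, hN⟩ := h
  refine ⟨f '' U, hof U hUo, ⟨ζ, hζU, rfl⟩, ?_⟩
  intro u
  obtain ⟨φ, hφ, hcase⟩ := hN (fun k => u k + 1)
  refine ⟨φ, hφ, ?_⟩
  rcases hcase with ⟨F, hF⟩ | hdiv
  · -- the limit at a point of `f '' U` is `F z` for any preimage `z ∈ U`
    have hpt : ∀ z ∈ U, Tendsto (fun n => f^[u (φ n)] (f z)) atTop (𝓝 (F z)) := by
      intro z hz
      have := (hF {z} (Set.singleton_subset_iff.2 hz) isCompact_singleton).tendsto_at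
        (Set.mem_singleton z)
      simpa [Function.iterate_succ_apply] using this
    set F' : E → E := fun w => if hw : ∃ z, z ∈ U ∧ f z = w then F hw.choose else 0 with hF'
    have hF'eq : ∀ z ∈ U, F' (f z) = F z := by
      intro z hz
      have hw : ∃ z', z' ∈ U ∧ f z' = f z := ⟨z, hz, rfl⟩
      have h1 := hpt _ hw.choose_spec.1
      rw [hw.choose_spec.2] at h1
      have h2 := hpt z hz
      simp only [hF', dif_pos hw]
      exact tendsto_nhds_unique h1 h2
    refine Or.inl ⟨F', fun K hK hKc => ?_⟩
    obtain ⟨L, hLc, hLU, hKL⟩ := compact_pullback hof hUo hKc hK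
    have := hF L hLU hLc
    rw [Metric.tendstoUniformlyOn_iff] at this ⊢
    intro ε hε
    filter_upwards [this ε hε] with n hn x hx
    obtain ⟨z, hz, rfl⟩ := hKL hx
    have := hn z hz
    rw [hF'eq z (hLU hz)]
    simpa [Function.iterate_succ_apply] using this
  · refine Or.inr fun K hK hKc M hM => ?_
    obtain ⟨L, hLc, hLU, hKL⟩ := compact_pullback hof hUo hKc hK
    filter_upwards [hdiv L hLU hLc M hM] with n hn x hx
    obtain ⟨z, hz, rfl⟩ := hKL hx
    have := hn z hz
    simpa [Function.iterate_succ_apply] using this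

/-- Entire non-constant functions are open maps. -/
lemma isOpenMap_of_entire {g : ℂ → ℂ} (hg : Differentiable ℂ g)
    (hgnc : ¬ ∃ c : ℂ, g = fun _ => c) : IsOpenMap g := by
  have hga : AnalyticOnNhd ℂ g Set.univ :=
    (hg.differentiableOn).analyticOnNhd isOpen_univ
  rcases hga.is_constant_or_isOpen isPreconnected_univ with ⟨w, hw⟩ | hopen
  · exact absurd ⟨w, funext fun z => hw z (Set.mem_univ z)⟩ hgnc
  · exact fun s hs => hopen s (Set.subset_univ s) hs

/-- For an entire strongly non-constant 𝕋-holomorphic function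
`f(w₁, w₂) = (g(w₁), h(w₂))` (with `g`, `h` entire and non-constant), the bicomplex Julia set
`J₂(f)` is completely invariant: `ζ ∈ J₂(f)` implies `f(ζ) ∈ J₂(f)`, and `f(ζ') ∈ J₂(f)`
implies `ζ' ∈ J₂(f)`. -/
theorem stmt19 (g h : ℂ → ℂ)
    (hg : Differentiable ℂ g) (hh : Differentiable ℂ h)
    (hgnc : ¬ ∃ c : ℂ, g = fun _ => c) (hhnc : ¬ ∃ c : ℂ, h = fun _ => c) :
    let f : ℂ × ℂ → ℂ × ℂ := fun w => (g w.1, h w.2)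
    (∀ ζ : ℂ × ℂ, ζ ∈ juliaSet f → f ζ ∈ juliaSet f) ∧
    (∀ ζ' : ℂ × ℂ, f ζ' ∈ juliaSet f → ζ' ∈ juliaSet f) := by
  intro f
  have hfc : Continuous f :=
    (hg.continuous.comp continuous_fst).prodMk (hh.continuous.comp continuous_snd)
  have hfo : IsOpenMap f :=
    (isOpenMap_of_entire hg hgnc).prodMap (isOpenMap_of_entire hh hhnc)
  constructor
  · intro ζ hζ hn
    exact hζ (normal_pullback hfc hn)
  · intro ζ' hζ' hn
    exact hζ' (normal_pushforward hfc hfo hn)
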